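/- Let M be a conditional oriented matroid on I. For every flat F of M there exists at least one basic set for F, and any two basic sets for F have the same cardinality. Moreover, if F' ⊆ F are flats, there exist basic sets B' for F' and B for F with B' ⊆ B. -/
import Mathlib


/-- The composition `X ∘ Y` of signed subsets of `I`. -/
def scomp {I : Type*} (X Y : I → SignType) : I → SignType :=
  fun i => if X i ≠ 0 then X i else Y i

/-- The separating set of two signed subsets. -/
def sepSet {I : Type*} (X Y : I → SignType) : Set I :=
  {i | X i = -(Y i) ∧ X i ≠ 0}

/-- A conditional oriented matroid on the ground set `I`. -/
structure IsCOM {I : Type*} (M : Set (I → SignType)) : Prop where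
  faceSym : ∀ X ∈ M, ∀ Y ∈ M, scomp X (-Y) ∈ M
  strongElim : ∀ X ∈ M, ∀ Y ∈ M, ∀ i ∈ sepSet X Y,
    ∃ Z ∈ M, Z i = 0 ∧ ∀ j ∉ sepSet X Y, Z j = scomp X Y j

/-- The flat (zero set) of a covector. -/
def sflat {I : Type*} (X : I → SignType) : Set I := {i | X i = 0}

/-- The collection of flats of a conditional oriented matroid. -/
def flats {I : Type*} (M : Set (I → SignType)) : Set (Set I) :=
  {F | ∃ X ∈ M, sflat X = F}

/-- `F` is the minimal flat of `M` containing `C` (the closure `C̄` of `C`). -/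
def minimalFlatOf {I : Type*} (M : Set (I → SignType)) (C F : Set I) : Prop :=
  F ∈ flats M ∧ C ⊆ F ∧ ∀ F' ∈ flats M, C ⊆ F' → F ⊆ F'

/-- `B` is basic for the flat `F`: the closure of `B` is `F` and no proper
subset of `B` has closure `F`. -/
def IsBasic {I : Type*} (M : Set (I → SignType)) (B : Finset I) (F : Set I) : Prop :=
  minimalFlatOf M (B : Set I) F ∧
    ∀ B' ⊆ B, minimalFlatOf M (B' : Set I) F → B' = B


namespace COMaux

variable {I : Type*}

/-- The closure of `C`: elements killed by every covector vanishing on `C`. -/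
def cl (M : Set (I → SignType)) (C : Set I) : Set I :=
  {i | ∀ Z ∈ M, (∀ c ∈ C, Z c = 0) → Z i = 0}

lemma subset_cl (M : Set (I → SignType)) (C : Set I) : C ⊆ cl M C :=
  fun i hi Z _ h => h i hi

lemma cl_mono {M : Set (I → SignType)} {C D : Set I} (h : C ⊆ D) : cl M C ⊆ cl M D :=
  fun i hi Z hZ hv => hi Z hZ (fun c hc => hv c (h hc))

lemma cl_subset_of_subset_cl {M : Set (I → SignType)} {C D : Set I}
    (h : C ⊆ cl M D) : cl M C ⊆ cl M D := by
  intro i hi Z hZ hv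
  exact hi Z hZ (fun c hc => h hc Z hZ hv)

lemma cl_flat {M : Set (I → SignType)} {X : I → SignType} (hX : X ∈ M) :
    cl M (sflat X) = sflat X := by
  apply Set.Subset.antisymm _ (subset_cl M _)
  intro i hi
  exact hi X hX (fun c hc => hc)

lemma sflat_scomp (X Y : I → SignType) : sflat (scomp X Y) = sflat X ∩ sflat Y := by
  ext i
  simp only [sflat, scomp, Set.mem_setOf_eq, Set.mem_inter_iff]
  by_cases h : X i = 0 <;> simp [h]

lemma comp_mem {M : Set (I → SignType)} (hM : IsCOM M) {X Y : I → SignType}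
    (hX : X ∈ M) (hY : Y ∈ M) : scomp X Y ∈ M := by
  have h1 : scomp X (-Y) ∈ M := hM.faceSym X hX Y hY
  have h2 : scomp X (-(scomp X (-Y))) ∈ M := hM.faceSym X hX _ h1
  have : scomp X (-(scomp X (-Y))) = scomp X Y := by
    funext i
    simp only [scomp, Pi.neg_apply]
    by_cases h : X i = 0 <;> simp [h]
  rwa [this] at h2

lemma inter_flats {M : Set (I → SignType)} (hM : IsCOM M) (s : Finset (I → SignType))
    (hne : s.Nonempty) (hsub : ↑s ⊆ M) :
    ∃ W ∈ M, sflat W = ⋂ Z ∈ s, sflat Z := by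
  classical
  induction s using Finset.induction_on with
  | empty => exact absurd hne (by simp)
  | @insert X s hXs ih =>
    have hXM : X ∈ M := hsub (by simp)
    by_cases hs : s.Nonempty
    · obtain ⟨W, hW, hWf⟩ := ih hs (fun Z hZ => hsub (by simp [Finset.mem_coe.mp hZ]))
      refine ⟨scomp X W, comp_mem hM hXM hW, ?_⟩
      rw [sflat_scomp, hWf]
      simp
    · rw [Finset.not_nonempty_iff_eq_empty] at hs
      subst hs
      exact ⟨X, hXM, by simp⟩

lemma cl_mem_flats {M : Set (I → SignType)} [Finite I] (hM : IsCOM M)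
    {X : I → SignType} (hX : X ∈ M) {C : Set I} (hC : C ⊆ sflat X) :
    ∃ W ∈ M, sflat W = cl M C := by
  classical
  have : Finite (I → SignType) := by infer_instance
  set S : Set (I → SignType) := {Z | Z ∈ M ∧ ∀ c ∈ C, Z c = 0} with hS
  have hfin : S.Finite := Set.toFinite S
  have hXS : X ∈ hfin.toFinset := by
    rw [Set.Finite.mem_toFinset]
    exact ⟨hX, fun c hc => hC hc⟩
  obtain ⟨W, hW, hWf⟩ := inter_flats hM hfin.toFinset ⟨X, hXS⟩
    (fun Z hZ => ((Set.Finite.mem_toFinset hfin).mp hZ).1)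
  refine ⟨W, hW, hWf.trans ?_⟩
  ext i
  simp only [Set.mem_iInter, Set.Finite.mem_toFinset, cl, Set.mem_setOf_eq, hS]
  constructor
  · intro h Z hZ hv
    exact h Z ⟨hZ, hv⟩
  · intro h Z ⟨hZ, hv⟩
    exact h Z hZ hv

lemma minimalFlatOf_iff {M : Set (I → SignType)} [Finite I] (hM : IsCOM M)
    {X : I → SignType} (hX : X ∈ M) {C : Set I} (hC : C ⊆ sflat X) :
    minimalFlatOf M C (sflat X) ↔ cl M C = sflat X := by
  constructor
  · rintro ⟨_, _, hmin⟩
    apply Set.Subset.antisymm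
    · intro i hi
      exact hi X hX (fun c hc => hC hc)
    · obtain ⟨W, hW, hWf⟩ := cl_mem_flats hM hX hC
      exact fun i hi => hWf ▸ hmin (sflat W) ⟨W, hW, rfl⟩ (hWf ▸ subset_cl M C) hi
  · intro h
    refine ⟨⟨X, hX, rfl⟩, hC, ?_⟩
    rintro F' ⟨Z, hZ, rfl⟩ hCF' i hi
    exact (h ▸ hi : i ∈ cl M C) Z hZ (fun c hc => hCF' hc)

section Exchange
variable {I : Type*}

lemma signtype_dichotomy {s t : SignType} (hs : s ≠ 0) (ht : t ≠ 0) :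
    s = t ∨ s = -t := by
  cases s <;> cases t <;> simp_all <;> decide

/-- The exchange property of the closure operator inside a flat. -/
lemma exchange {M : Set (I → SignType)} (hM : IsCOM M) {X0 : I → SignType}
    (hX0 : X0 ∈ M) {C : Set I} (hC : C ⊆ sflat X0) {a b : I}
    (ha : a ∈ sflat X0) (hb : b ∈ sflat X0)
    (h1 : a ∈ cl M (insert b C)) (h2 : a ∉ cl M C) : b ∈ cl M (insert a C) := by
  simp only [cl, Set.mem_setOf_eq, not_forall] at h2
  obtain ⟨Y, hY, hYC, hYa⟩ : ∃ Y ∈ M, (∀ c ∈ C, Y c = 0) ∧ Y a ≠ 0 := by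
    obtain ⟨Y, hY⟩ := h2
    exact ⟨Y, hY.1, by tauto, by tauto⟩
  have hYb : Y b ≠ 0 := by
    intro h0
    exact hYa (h1 Y hY (fun c hc => by rcases Set.mem_insert_iff.mp hc with h | h
                                       · simp [h, h0]
                                       · exact hYC c h))
  -- key: no covector Z vanishing on C ∪ {a} with Z b = -(Y b)
  have key : ∀ Z ∈ M, (∀ c ∈ C, Z c = 0) → Z a = 0 → Y b = -(Z b) → False := by
    intro Z hZ hZC hZa hZb
    have hbsep : b ∈ sepSet Y Z := ⟨hZb, hYb⟩
    obtain ⟨W, hW, hWb, hWj⟩ := hM.strongElim Y hY Z hZ b hbsep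
    have hWa : W a ≠ 0 := by
      have hanotsep : a ∉ sepSet Y Z := by
        intro ⟨h', h''⟩
        rw [hZa] at h'
        simp at h'
        exact h'' h'
      rw [hWj a hanotsep]
      simpa [scomp, hYa] using hYa
    apply hWa
    apply h1 W hW
    intro c hc
    rcases Set.mem_insert_iff.mp hc with h | h
    · rw [h]; exact hWb
    · have hcnot : c ∉ sepSet Y Z := fun ⟨_, h''⟩ => h'' (hYC c h)
      rw [hWj c hcnot]
      simp [scomp, hYC c h, hZC c h]
  -- main argument
  intro Z hZ hv
  by_contra hZb
  have hZC : ∀ c ∈ C, Z c = 0 := fun c hc => hv c (Set.mem_insert_iff.mpr (Or.inr hc))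
  have hZa : Z a = 0 := hv a (Set.mem_insert_iff.mpr (Or.inl rfl))
  rcases signtype_dichotomy hYb hZb with heq | hne
  · -- flip Z using X0
    set Z2 : I → SignType := scomp X0 (-Z) with hZ2def
    have hZ2 : Z2 ∈ M := hM.faceSym X0 hX0 Z hZ
    have hval : ∀ i ∈ sflat X0, Z2 i = -(Z i) := by
      intro i hi
      simp [hZ2def, scomp, (show X0 i = 0 from hi)]
    apply key Z2 hZ2
    · intro c hc
      rw [hval c (hC hc), hZC c hc]; rfl
    · rw [hval a ha, hZa]; rfl
    · rw [hval b hb, neg_neg, heq]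
  · exact key Z hZ hZC hZa hne

end Exchange
section FinsetPart
variable {I : Type*} [Fintype I] [DecidableEq I] {M : Set (I → SignType)}

/-- `B` spans the flat `F`. -/
def Spans (M : Set (I → SignType)) (F : Set I) (B : Finset I) : Prop :=
  ↑B ⊆ F ∧ cl M ↑B = F

/-- `B` is independent inside `F`. -/
def Indep (M : Set (I → SignType)) (F : Set I) (B : Finset I) : Prop :=
  ↑B ⊆ F ∧ ∀ b ∈ B, b ∉ cl M ↑(B.erase b)

lemma isBasic_iff (hM : IsCOM M) {X0 : I → SignType} (hX0 : X0 ∈ M)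
    {F : Set I} (hF : sflat X0 = F) (B : Finset I) :
    IsBasic M B F ↔ Spans M F B ∧ Indep M F B := by
  subst hF
  constructor
  · rintro ⟨hmf, hmin⟩
    have hBF : ↑B ⊆ sflat X0 := hmf.2.1
    have hclB : cl M ↑B = sflat X0 := (minimalFlatOf_iff hM hX0 hBF).mp hmf
    refine ⟨⟨hBF, hclB⟩, hBF, ?_⟩
    intro b hb hbcl
    have hsub : (↑(B.erase b) : Set I) ⊆ sflat X0 :=
      Set.Subset.trans (by exact_mod_cast Finset.coe_subset.mpr (Finset.erase_subset b B)) hBF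
    have hclE : cl M ↑(B.erase b) = sflat X0 := by
      apply Set.Subset.antisymm
      · intro i hi
        exact hi X0 hX0 (fun c hc => hsub hc)
      · rw [← hclB]
        apply cl_subset_of_subset_cl
        intro x hx
        rcases Finset.mem_coe.mp hx |> (fun h => Decidable.em (x = b)) with h | h
        · exact h ▸ hbcl
        · exact subset_cl M _ (Finset.mem_coe.mpr (Finset.mem_erase.mpr ⟨h, Finset.mem_coe.mp hx⟩))
    have := hmin (B.erase b) (Finset.erase_subset b B)
      ((minimalFlatOf_iff hM hX0 hsub).mpr hclE)
    exact Finset.notMem_erase b B (this.symm ▸ hb)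
  · rintro ⟨⟨hBF, hclB⟩, _, hind⟩
    refine ⟨(minimalFlatOf_iff hM hX0 hBF).mpr hclB, ?_⟩
    intro B' hB' hmf'
    by_contra hne
    obtain ⟨b, hbB, hbB'⟩ := Finset.exists_of_ssubset (lt_of_le_of_ne hB' hne)
    have hclB' : cl M ↑B' = sflat X0 := (minimalFlatOf_iff hM hX0 hmf'.2.1).mp hmf'
    apply hind b hbB
    have hb : b ∈ cl M ↑B' := by
      rw [hclB']; exact hBF (Finset.mem_coe.mpr hbB)
    apply cl_mono _ hb
    intro x hx
    exact Finset.mem_coe.mpr (Finset.mem_erase.mpr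
      ⟨fun h => hbB' (h ▸ Finset.mem_coe.mp hx), hB' (Finset.mem_coe.mp hx)⟩)

end FinsetPart
section Counting
variable {I : Type*} [Fintype I] [DecidableEq I] {M : Set (I → SignType)}

lemma indep_card_le (hM : IsCOM M) {X0 : I → SignType} (hX0 : X0 ∈ M)
    {F : Set I} (hF : sflat X0 = F) {S : Finset I} (hS : Spans M F S) :
    ∀ n (B : Finset I), (B \ S).card ≤ n → Indep M F B → B.card ≤ S.card := by
  intro n
  induction n with
  | zero =>
    intro B hn hB
    apply Finset.card_le_card
    intro x hx
    by_contra hxS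
    have : x ∈ B \ S := Finset.mem_sdiff.mpr ⟨hx, hxS⟩
    simp [Finset.card_eq_zero.mp (Nat.le_zero.mp hn)] at this
  | succ n ih =>
    intro B hn hB
    by_cases hsub : B ⊆ S
    · exact Finset.card_le_card hsub
    · obtain ⟨b, hbB, hbS⟩ := Finset.not_subset.mp hsub
      have hbF : b ∈ F := hB.1 (Finset.mem_coe.mpr hbB)
      have hbncl : b ∉ cl M ↑(B.erase b) := hB.2 b hbB
      have hScl : ¬(↑S ⊆ cl M (↑(B.erase b) : Set I)) := by
        intro hsub2
        exact hbncl ((hS.2 ▸ cl_subset_of_subset_cl hsub2 : cl M ↑S ⊆ _) (hS.2 ▸ hbF))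
      obtain ⟨s, hsS, hscl⟩ := Set.not_subset.mp hScl
      have hsS' : s ∈ S := Finset.mem_coe.mp hsS
      have hsF : s ∈ F := hS.1 hsS
      have hsB : s ∉ B.erase b := fun h => hscl (subset_cl M _ (Finset.mem_coe.mpr h))
      set B2 := insert s (B.erase b) with hB2def
      have hB2F : ↑B2 ⊆ F := by
        intro x hx
        rcases Finset.mem_insert.mp (Finset.mem_coe.mp hx) with h | h
        · exact h ▸ hsF
        · exact hB.1 (Finset.mem_coe.mpr (Finset.mem_of_mem_erase h))
      have hcard : B2.card = B.card := by
        rw [hB2def, Finset.card_insert_of_notMem hsB, Finset.card_erase_of_mem hbB]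
        have : 1 ≤ B.card := Finset.card_pos.mpr ⟨b, hbB⟩
        omega
      have hindep2 : Indep M F B2 := by
        refine ⟨hB2F, ?_⟩
        intro x hx hxcl
        rcases Finset.mem_insert.mp hx with rfl | hxE
        · rw [hB2def, Finset.erase_insert hsB] at hxcl
          exact hscl hxcl
        · have hxs : x ≠ s := fun h => hsB (h ▸ hxE)
          have hxb : x ≠ b := Finset.ne_of_mem_erase hxE
          have hxB : x ∈ B := Finset.mem_of_mem_erase hxE
          have hErw : B2.erase x = insert s ((B.erase b).erase x) := by
            rw [hB2def, Finset.erase_insert_of_ne hxs.symm]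
          rw [hErw] at hxcl
          rw [Finset.coe_insert] at hxcl
          set D := (B.erase b).erase x with hDdef
          have hDF : (↑D : Set I) ⊆ sflat X0 := by
            rw [hF]
            exact fun y hy => hB.1 (Finset.mem_coe.mpr
              (Finset.mem_of_mem_erase (Finset.mem_of_mem_erase (Finset.mem_coe.mp hy))))
          have hxF : x ∈ sflat X0 := hF ▸ hB.1 (Finset.mem_coe.mpr hxB)
          have hsF' : s ∈ sflat X0 := hF ▸ hsF
          have hxnclD : x ∉ cl M ↑D := by
            intro h
            apply hB.2 x hxB
            apply cl_mono _ h
            intro y hy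
            obtain ⟨hyx, hyBb⟩ := Finset.mem_erase.mp (Finset.mem_coe.mp hy)
            exact Finset.mem_coe.mpr (Finset.mem_erase.mpr ⟨hyx, Finset.mem_of_mem_erase hyBb⟩)
          have hsexch : s ∈ cl M (insert x ↑D) :=
            exchange hM hX0 hDF hxF hsF' hxcl hxnclD
          apply hscl
          apply cl_mono _ hsexch
          intro y hy
          rcases Set.mem_insert_iff.mp hy with rfl | hyD
          · exact Finset.mem_coe.mpr hxE
          · exact Finset.mem_coe.mpr (Finset.mem_of_mem_erase (Finset.mem_coe.mp hyD))
      have hdiff : (B2 \ S).card ≤ n := by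
        have hsub3 : B2 \ S ⊆ (B \ S).erase b := by
          intro y hy
          obtain ⟨hyB2, hyS⟩ := Finset.mem_sdiff.mp hy
          rcases Finset.mem_insert.mp hyB2 with rfl | hyE
          · exact absurd hsS' hyS
          · exact Finset.mem_erase.mpr ⟨Finset.ne_of_mem_erase hyE,
              Finset.mem_sdiff.mpr ⟨Finset.mem_of_mem_erase hyE, hyS⟩⟩
        have hbBS : b ∈ B \ S := Finset.mem_sdiff.mpr ⟨hbB, hbS⟩
        have := Finset.card_le_card hsub3
        rw [Finset.card_erase_of_mem hbBS] at this
        omega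
      calc B.card = B2.card := hcard.symm
        _ ≤ S.card := ih B2 hdiff hindep2

end Counting
section Extension
variable {I : Type*} [Fintype I] [DecidableEq I] {M : Set (I → SignType)}

lemma exists_basic_extension (hM : IsCOM M) {X0 : I → SignType} (hX0 : X0 ∈ M)
    {F : Set I} (hF : sflat X0 = F) {B0 : Finset I} (hB0 : Indep M F B0) :
    ∃ B : Finset I, IsBasic M B F ∧ B0 ⊆ B := by
  classical
  have hclF : cl M F = F := hF ▸ cl_flat hX0
  set T : Finset (Finset I) :=
    Finset.univ.filter (fun B => Indep M F B ∧ B0 ⊆ B) with hT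
  have hB0T : B0 ∈ T := by simp [hT, hB0]
  obtain ⟨B, hBT, hBmax⟩ := T.exists_max_image Finset.card ⟨B0, hB0T⟩
  simp only [hT, Finset.mem_filter, Finset.mem_univ, true_and] at hBT
  obtain ⟨hBind, hB0B⟩ := hBT
  have hBspan : Spans M F B := by
    refine ⟨hBind.1, Set.Subset.antisymm ?_ ?_⟩
    · rw [← hclF]; exact cl_mono hBind.1
    · by_contra hns
      obtain ⟨x, hxF, hxcl⟩ := Set.not_subset.mp hns
      have hxB : x ∉ B := fun h => hxcl (subset_cl M _ (Finset.mem_coe.mpr h))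
      have hind2 : Indep M F (insert x B) := by
        refine ⟨?_, ?_⟩
        · intro y hy
          rcases Finset.mem_insert.mp (Finset.mem_coe.mp hy) with rfl | h
          · exact hxF
          · exact hBind.1 (Finset.mem_coe.mpr h)
        · intro y hy hycl
          rcases Finset.mem_insert.mp hy with rfl | hyB
          · rw [Finset.erase_insert hxB] at hycl
            exact hxcl hycl
          · have hyx : y ≠ x := fun h => hxB (h ▸ hyB)
            rw [Finset.erase_insert_of_ne hyx.symm, Finset.coe_insert] at hycl
            have hDF : (↑(B.erase y) : Set I) ⊆ sflat X0 := by
              rw [hF]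
              exact fun z hz => hBind.1 (Finset.mem_coe.mpr
                (Finset.mem_of_mem_erase (Finset.mem_coe.mp hz)))
            have hyF : y ∈ sflat X0 := hF ▸ hBind.1 (Finset.mem_coe.mpr hyB)
            have hyncl : y ∉ cl M ↑(B.erase y) := hBind.2 y hyB
            have := exchange hM hX0 hDF hyF (hF ▸ hxF) hycl hyncl
            apply hxcl
            apply cl_mono _ this
            intro z hz
            rcases Set.mem_insert_iff.mp hz with rfl | hzD
            · exact Finset.mem_coe.mpr hyB
            · exact Finset.mem_coe.mpr (Finset.mem_of_mem_erase (Finset.mem_coe.mp hzD))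
      have hmemT : insert x B ∈ T := by
        simp only [hT, Finset.mem_filter, Finset.mem_univ, true_and]
        exact ⟨hind2, hB0B.trans (Finset.subset_insert x B)⟩
      have := hBmax _ hmemT
      rw [Finset.card_insert_of_notMem hxB] at this
      omega
  exact ⟨B, (isBasic_iff hM hX0 hF B).mpr ⟨hBspan, hBind⟩, hB0B⟩

lemma exists_basic (hM : IsCOM M) {X0 : I → SignType} (hX0 : X0 ∈ M)
    {F : Set I} (hF : sflat X0 = F) : ∃ B : Finset I, IsBasic M B F := by
  obtain ⟨B, hB, _⟩ := exists_basic_extension hM hX0 hF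
    (B0 := ∅) ⟨by simp, by simp⟩
  exact ⟨B, hB⟩

end Extension

end COMaux

/-- every flat `F` of a conditional oriented matroid on a finite
ground set has at least one basic set, any two basic sets for `F` have the same
cardinality, and for nested flats `F' ⊆ F` there exist nested basic sets
`B' ⊆ B`. -/
theorem basic_sets_exist_card_nested {I : Type*} [Fintype I]
    {M : Set (I → SignType)} (hM : IsCOM M) :
    (∀ F ∈ flats M,
      (∃ B : Finset I, IsBasic M B F) ∧
      ∀ B B' : Finset I, IsBasic M B F → IsBasic M B' F → B.card = B'.card) ∧
    (∀ F' ∈ flats M, ∀ F ∈ flats M, F' ⊆ F →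
      ∃ B' B : Finset I, IsBasic M B' F' ∧ IsBasic M B F ∧ B' ⊆ B) := by
  classical
  open COMaux in
  constructor
  · rintro F ⟨X0, hX0, hF⟩
    refine ⟨exists_basic hM hX0 hF, ?_⟩
    intro B B' hB hB'
    obtain ⟨hBs, hBi⟩ := (isBasic_iff hM hX0 hF B).mp hB
    obtain ⟨hB's, hB'i⟩ := (isBasic_iff hM hX0 hF B').mp hB'
    have h1 := indep_card_le hM hX0 hF hB's (B \ B').card B le_rfl hBi
    have h2 := indep_card_le hM hX0 hF hBs (B' \ B).card B' le_rfl hB'i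
    omega
  · rintro F' ⟨X0', hX0', hF'⟩ F ⟨X0, hX0, hF⟩ hFF
    obtain ⟨B', hB'⟩ := exists_basic hM hX0' hF'
    obtain ⟨_, hB'ind⟩ := (isBasic_iff hM hX0' hF' B').mp hB'
    have hB'indF : Indep M F B' := ⟨hB'ind.1.trans hFF, hB'ind.2⟩
    obtain ⟨B, hB, hsub⟩ := exists_basic_extension hM hX0 hF hB'indF
    exact ⟨B', B, hB', hB, hsub⟩
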